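/- Let p, q, r₀, s₀ be natural numbers with p, q ≥ 1 and q·r₀ − p·s₀ = 1, let N ∈ ℕ, and let μ₁, μ₂ be nonzero complex numbers with |μ₁| < 1 and |μ₁|^p·|μ₂|^q = 1. Set D₀ = |μ₁|^{1/(q(r₀ + s₀ + (N+1)(p+q)))}. Then for every m = (m₁, m₂) ∈ ℕ² of the form m = k₁·(r₀, s₀) + k₂·(p, q) with integers k₁ ≥ 1 and k₂ ≤ (N+1)·k₁, one has |μ₁^{m₁} · μ₂^{m₂}| ≤ D₀^{m₁ + m₂}. -/

import Mathlib

theorem eigenvalue_estimate (p q r₀ s₀ N : ℕ) (hp : 1 ≤ p) (hq : 1 ≤ q)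
    (hbez : (q : ℤ) * r₀ - (p : ℤ) * s₀ = 1)
    (μ₁ μ₂ : ℂ) (hμ₁ : μ₁ ≠ 0) (hμ₂ : μ₂ ≠ 0)
    (habs : ‖μ₁‖ < 1)
    (hres : ‖μ₁‖ ^ p * ‖μ₂‖ ^ q = 1)
    (D₀ : ℝ)
    (hD₀ : D₀ = ‖μ₁‖ ^ ((1 : ℝ) / (q * (r₀ + s₀ + (N + 1) * (p + q))))) :
    ∀ m₁ m₂ : ℕ, ∀ k₁ k₂ : ℤ, 1 ≤ k₁ → k₂ ≤ (N + 1 : ℤ) * k₁ →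
      (m₁ : ℤ) = k₁ * r₀ + k₂ * p → (m₂ : ℤ) = k₁ * s₀ + k₂ * q →
      ‖μ₁ ^ m₁ * μ₂ ^ m₂‖ ≤ D₀ ^ (m₁ + m₂) := by
  intro m₁ m₂ k₁ k₂ hk1 hk2 hm₁ hm₂
  set a := ‖μ₁‖ with ha_def
  set b := ‖μ₂‖ with hb_def
  have ha : 0 < a := norm_pos_iff.mpr hμ₁
  have hb : 0 < b := norm_pos_iff.mpr hμ₂
  have hq0 : (0 : ℝ) < q := by exact_mod_cast Nat.lt_of_lt_of_le Nat.zero_lt_one hq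
  have hp0 : (0 : ℝ) < p := by exact_mod_cast Nat.lt_of_lt_of_le Nat.zero_lt_one hp
  -- the denominator
  have hR : (0 : ℝ) < (r₀ : ℝ) + s₀ + (N + 1) * (p + q) := by positivity
  have hden : (0 : ℝ) < (q : ℝ) * ((r₀ : ℝ) + s₀ + (N + 1) * (p + q)) := by positivity
  -- b as a power of a
  have hres' : a ^ (p : ℝ) * b ^ (q : ℝ) = 1 := by
    rw [Real.rpow_natCast, Real.rpow_natCast]; exact hres
  have hbq : b ^ (q : ℝ) = a ^ (-(p : ℝ)) := by
    rw [Real.rpow_neg ha.le, Real.rpow_natCast]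
    field_simp
    rw [Real.rpow_natCast] at hres'
    simp only [Real.rpow_natCast] at hres' ⊢
    linarith [hres']
  have hb_eq : b = a ^ (-(p : ℝ) / q) := by
    have : (b ^ (q : ℝ)) ^ ((q : ℝ)⁻¹) = (a ^ (-(p : ℝ))) ^ ((q : ℝ)⁻¹) := by
      rw [hbq]
    rw [← Real.rpow_mul hb.le, ← Real.rpow_mul ha.le, mul_inv_cancel₀ hq0.ne',
      Real.rpow_one, neg_mul] at this
    rw [neg_div, div_eq_mul_inv]
    exact this

  -- key integer identity: q * m₁ - p * m₂ = k₁
  have key : (q : ℤ) * m₁ - (p : ℤ) * m₂ = k₁ := by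
    rw [hm₁, hm₂]; linear_combination k₁ * hbez
  -- LHS equals a ^ (k₁ / q)
  have hLHS : ‖μ₁ ^ m₁ * μ₂ ^ m₂‖ = a ^ ((k₁ : ℝ) / q) := by
    rw [norm_mul, norm_pow, norm_pow, ← ha_def, ← hb_def, hb_eq,
      ← Real.rpow_natCast (a ^ (-(p : ℝ) / q)) m₂, ← Real.rpow_mul ha.le,
      ← Real.rpow_natCast a m₁, ← Real.rpow_add ha]
    congr 1
    have keyR : (q : ℝ) * m₁ - (p : ℝ) * m₂ = k₁ := by exact_mod_cast key
    field_simp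
    linarith [keyR]
  -- RHS equals a ^ ((m₁ + m₂) / denom)
  have hRHS : D₀ ^ (m₁ + m₂) =
      a ^ ((1 : ℝ) / ((q : ℝ) * ((r₀ : ℝ) + s₀ + (N + 1) * (p + q))) * (m₁ + m₂)) := by
    rw [hD₀, ← Real.rpow_natCast
      (a ^ ((1 : ℝ) / ((q : ℝ) * ((r₀ : ℝ) + s₀ + (N + 1) * (p + q))))) (m₁ + m₂),
      ← Real.rpow_mul ha.le]
    push_cast
    ring_nf
  rw [hLHS, hRHS]
  apply Real.rpow_le_rpow_of_exponent_ge ha habs.le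
  -- exponent inequality
  rw [div_mul_eq_mul_div, one_mul, div_le_div_iff₀ hden hq0]
  have hint : ((m₁ : ℤ) + m₂) ≤ k₁ * ((r₀ : ℤ) + s₀ + (N + 1) * (p + q)) := by
    have h1 : k₂ * ((p : ℤ) + q) ≤ (N + 1) * k₁ * ((p : ℤ) + q) := by
      apply mul_le_mul_of_nonneg_right hk2
      positivity
    rw [hm₁, hm₂]
    nlinarith [h1]
  have hintR : ((m₁ : ℝ) + m₂) ≤ (k₁ : ℝ) * ((r₀ : ℝ) + s₀ + (N + 1) * (p + q)) := by
    exact_mod_cast hint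
  nlinarith [hintR, hq0]
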